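/- arXiv:1410.0214 — 3 statements merged into one kernel-verified Lean document; each statement's English description precedes it below -/
import Mathlib

section
/- Let X_0 be a real-valued random variable such that 0 < G(r) < ∞ for every r ≥ 0 and such that for every ε > 0, G(r+ε)/G(r) → 0 as r → ∞. Writing m_r := E[U_r(X_0)] and Y_{0,r} := U_r(X_0) − m_r, one has for every ε > 0 that E[Y_{0,r}² · 1(|Y_{0,r}| ≥ ε)] = o(G(r)) as r → ∞. -/
open MeasureTheory ProbabilityTheory Filter Asymptotics
open scoped ENNReal Topology NNReal

noncomputable section

/-- The shrinking operator `U_r : ℝ → ℝ` (for `r ≥ 0`):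
`U_r(x) = x - r` if `x > r`, `0` if `|x| ≤ r`, and `x + r` if `x < -r`. -/
def shrink (r x : ℝ) : ℝ := if r < x then x - r else if x < -r then x + r else 0

variable {Ω : Type*}

/-- `G(r) := ∫₀^∞ t · P(|X| > t + r) dt`. -/
def Gfun [MeasurableSpace Ω] (P : Measure Ω) (X : Ω → ℝ) (r : ℝ) : ℝ≥0∞ :=
  ∫⁻ t in Set.Ioi (0 : ℝ), ENNReal.ofReal t * P {ω | t + r < |X ω|}

/-- Strict stationarity of a two-sided sequence of random variables: for all `j, l ∈ ℤ`
and `m ≥ 0`, the random vectors `(X_j, …, X_{j+m})` and `(X_l, …, X_{l+m})` have the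
same distribution. -/
def StrictlyStationary [MeasurableSpace Ω] (P : Measure Ω) (X : ℤ → Ω → ℝ) : Prop :=
  ∀ (j l : ℤ) (m : ℕ),
    Measure.map (fun ω => fun i : Fin (m + 1) => X (j + i) ω) P =
    Measure.map (fun ω => fun i : Fin (m + 1) => X (l + i) ω) P

/-- The correlation coefficient of two real random variables. -/
def corr [MeasurableSpace Ω] (P : Measure Ω) (f g : Ω → ℝ) : ℝ :=
  (∫ ω, (f ω - ∫ x, f x ∂P) * (g ω - ∫ x, g x ∂P) ∂P) /
    (Real.sqrt (∫ ω, (f ω - ∫ x, f x ∂P) ^ 2 ∂P) *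
      Real.sqrt (∫ ω, (g ω - ∫ x, g x ∂P) ^ 2 ∂P))

/-- The maximal correlation coefficient `ρ(𝒜, ℬ)`: the supremum of `|Corr(f,g)|` over
square-integrable `f` measurable w.r.t. `𝒜` and `g` measurable w.r.t. `ℬ`. -/
def maxCorr [mΩ : MeasurableSpace Ω] (P : Measure Ω) (A B : MeasurableSpace Ω) : ℝ :=
  sSup { c | ∃ f g : Ω → ℝ, Measurable[A] f ∧ Measurable[B] g ∧
    MemLp f 2 P ∧ MemLp g 2 P ∧ c = |@corr Ω mΩ P f g| }

/-- The strong mixing coefficient `α(𝒜, ℬ)`. -/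
def alphaMix [MeasurableSpace Ω] (P : Measure Ω) (A B : MeasurableSpace Ω) : ℝ :=
  sSup { c | ∃ s t : Set Ω, MeasurableSet[A] s ∧ MeasurableSet[B] t ∧
    c = |(P (s ∩ t)).toReal - (P s).toReal * (P t).toReal| }

/-- The σ-field generated by the random variables `X k`, `k ∈ S`. -/
def genFrom [MeasurableSpace Ω] (X : ℤ → Ω → ℝ) (S : Set ℤ) : MeasurableSpace Ω :=
  ⨆ k ∈ S, MeasurableSpace.comap (X k) inferInstance

/-- `ρ(n) = ρ(σ(X_k, k ≤ 0), σ(X_k, k ≥ n))`. -/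
def rhoCoef [MeasurableSpace Ω] (P : Measure Ω) (X : ℤ → Ω → ℝ) (n : ℕ) : ℝ :=
  maxCorr P (genFrom X {k | k ≤ 0}) (genFrom X {k | (n : ℤ) ≤ k})

/-- `α(n) = α(σ(X_k, k ≤ 0), σ(X_k, k ≥ n))`. -/
def alphaCoef [MeasurableSpace Ω] (P : Measure Ω) (X : ℤ → Ω → ℝ) (n : ℕ) : ℝ :=
  alphaMix P (genFrom X {k | k ≤ 0}) (genFrom X {k | (n : ℤ) ≤ k})

/-- `ρ*(n)`: the supremum of `ρ(σ(X_k, k ∈ S), σ(X_k, k ∈ T))` over all pairs of nonempty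
disjoint `S, T ⊆ ℤ` with `dist(S,T) ≥ n`. -/
def rhoStarCoef [MeasurableSpace Ω] (P : Measure Ω) (X : ℤ → Ω → ℝ) (n : ℕ) : ℝ :=
  sSup { c | ∃ S T : Set ℤ, S.Nonempty ∧ T.Nonempty ∧ Disjoint S T ∧
    (∀ s ∈ S, ∀ t ∈ T, (n : ℤ) ≤ |s - t|) ∧
    c = maxCorr P (genFrom X S) (genFrom X T) }

/-- `Y_{k,r} := U_r(X_k) - E[U_r(X_0)]`. -/
def Ymix [MeasurableSpace Ω] (P : Measure Ω) (X : ℤ → Ω → ℝ) (k : ℤ) (r : ℝ) (ω : Ω) : ℝ :=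
  shrink r (X k ω) - ∫ ω', shrink r (X 0 ω') ∂P

lemma measurable_shrink (r : ℝ) : Measurable (shrink r) := by
  unfold shrink
  exact Measurable.ite (measurableSet_lt measurable_const measurable_id)
    (measurable_id.sub measurable_const)
    (Measurable.ite (measurableSet_lt measurable_id measurable_const)
      (measurable_id.add measurable_const) measurable_const)

lemma abs_shrink {r : ℝ} (hr : 0 ≤ r) (x : ℝ) : |shrink r x| = max (|x| - r) 0 := by
  unfold shrink
  split_ifs with h1 h2
  · rw [abs_of_pos (show (0:ℝ) < x by linarith), abs_of_nonneg (show (0:ℝ) ≤ x - r by linarith),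
      max_eq_left (by linarith)]
  · rw [abs_of_neg (show x < 0 by linarith), abs_of_neg (show x + r < 0 by linarith),
      max_eq_left (by linarith)]
    ring
  · rw [abs_zero, max_eq_right (by rcases abs_cases x with ⟨h, _⟩ | ⟨h, _⟩ <;> linarith)]

lemma lintegral_shrink_sq [MeasurableSpace Ω] (P : Measure Ω)
    (X₀ : Ω → ℝ) (hmeas : Measurable X₀) {r : ℝ} (hr : 0 ≤ r) :
    ∫⁻ ω, ENNReal.ofReal ((shrink r (X₀ ω)) ^ 2) ∂P = 2 * Gfun P X₀ r := by
  have hpt : ∀ ω, (shrink r (X₀ ω)) ^ 2 = |shrink r (X₀ ω)| ^ (2:ℝ) := by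
    intro ω
    rw [show (2:ℝ) = ((2:ℕ):ℝ) by norm_num, Real.rpow_natCast, sq_abs]
  simp_rw [hpt]
  rw [MeasureTheory.lintegral_rpow_eq_lintegral_meas_lt_mul P
    (f := fun ω => |shrink r (X₀ ω)|)
    (Filter.Eventually.of_forall fun ω => abs_nonneg _)
    (((measurable_shrink r).comp hmeas).abs.aemeasurable) (by norm_num : (0:ℝ) < 2)]
  have hset : ∀ t ∈ Set.Ioi (0:ℝ),
      P {a | t < |shrink r (X₀ a)|} * ENNReal.ofReal (t ^ ((2:ℝ) - 1)) =
        ENNReal.ofReal t * P {ω | t + r < |X₀ ω|} := by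
    intro t ht
    rw [Set.mem_Ioi] at ht
    have : {a | t < |shrink r (X₀ a)|} = {ω | t + r < |X₀ ω|} := by
      ext ω
      simp only [Set.mem_setOf_eq, abs_shrink hr, lt_max_iff]
      constructor
      · rintro (h | h) <;> linarith
      · intro h; left; linarith
    rw [this, show (2:ℝ) - 1 = 1 by norm_num, Real.rpow_one, mul_comm]
  rw [setLIntegral_congr_fun measurableSet_Ioi hset]
  rw [Gfun, ENNReal.ofReal_ofNat]

lemma Gfun_antitone [MeasurableSpace Ω] (P : Measure Ω) (X₀ : Ω → ℝ) :
    Antitone (Gfun P X₀) := by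
  intro r₁ r₂ h
  refine lintegral_mono fun t => mul_le_mul_right (measure_mono ?_) _
  intro ω hω
  simp only [Set.mem_setOf_eq] at hω ⊢
  linarith

lemma Gfun_toReal_tendsto_zero [MeasurableSpace Ω] (P : Measure Ω) (X₀ : Ω → ℝ)
    (hG : ∀ r : ℝ, 0 ≤ r → 0 < Gfun P X₀ r ∧ Gfun P X₀ r < ∞)
    (hGratio : ∀ ε : ℝ, 0 < ε →
      Tendsto (fun r : ℝ => (Gfun P X₀ (r + ε)).toReal / (Gfun P X₀ r).toReal)
        atTop (𝓝 0)) :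
    Tendsto (fun r => (Gfun P X₀ r).toReal) atTop (𝓝 0) := by
  have hlim : Tendsto (Gfun P X₀) atTop (𝓝 (⨅ r, Gfun P X₀ r)) :=
    tendsto_atTop_iInf (Gfun_antitone P X₀)
  set L := ⨅ r, Gfun P X₀ r with hL
  have hLtop : L ≠ ∞ := ne_top_of_le_ne_top (hG 0 le_rfl).2.ne (iInf_le _ 0)
  rcases eq_or_ne L 0 with hL0 | hL0
  · have := (ENNReal.tendsto_toReal (hL0 ▸ hLtop)).comp (hL0 ▸ hlim)
    simpa [Function.comp_def] using this
  · exfalso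
    have h1 : Tendsto (fun r => (Gfun P X₀ r).toReal) atTop (𝓝 L.toReal) :=
      (ENNReal.tendsto_toReal hLtop).comp hlim
    have h2 : Tendsto (fun r => (Gfun P X₀ (r + 1)).toReal) atTop (𝓝 L.toReal) :=
      h1.comp (tendsto_atTop_add_const_right _ 1 tendsto_id)
    have hLne : L.toReal ≠ 0 := ENNReal.toReal_ne_zero.mpr ⟨hL0, hLtop⟩
    have h3 := h2.div h1 hLne
    rw [div_self hLne] at h3
    exact one_ne_zero (tendsto_nhds_unique h3 (hGratio 1 one_pos))

lemma abs_shrink_le_sq {r x : ℝ} (hr : 1 ≤ r) : |shrink r x| ≤ (shrink (r - 1) x) ^ 2 := by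
  rw [← sq_abs, abs_shrink (by linarith : (0:ℝ) ≤ r) x,
    abs_shrink (by linarith : (0:ℝ) ≤ r - 1) x]
  rcases le_total (|x| - r) 0 with h | h
  · rw [max_eq_right h]; positivity
  · rw [max_eq_left h, max_eq_left (by linarith)]
    nlinarith

lemma integrable_shrink_sq [MeasurableSpace Ω] (P : Measure Ω)
    (X₀ : Ω → ℝ) (hmeas : Measurable X₀) {s : ℝ} (hs : 0 ≤ s)
    (hfin : Gfun P X₀ s < ∞) :
    Integrable (fun ω => (shrink s (X₀ ω)) ^ 2) P := by
  refine ⟨(((measurable_shrink s).comp hmeas).pow_const 2).aestronglyMeasurable, ?_⟩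
  rw [hasFiniteIntegral_iff_ofReal (Filter.Eventually.of_forall fun ω => sq_nonneg _)]
  rw [lintegral_shrink_sq P X₀ hmeas hs]
  exact ENNReal.mul_lt_top (by norm_num) hfin

lemma integral_shrink_tendsto_zero [MeasurableSpace Ω] (P : Measure Ω) [IsProbabilityMeasure P]
    (X₀ : Ω → ℝ) (hmeas : Measurable X₀)
    (hG : ∀ r : ℝ, 0 ≤ r → 0 < Gfun P X₀ r ∧ Gfun P X₀ r < ∞)
    (hGratio : ∀ ε : ℝ, 0 < ε →
      Tendsto (fun r : ℝ => (Gfun P X₀ (r + ε)).toReal / (Gfun P X₀ r).toReal)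
        atTop (𝓝 0)) :
    Tendsto (fun r => ∫ ω, shrink r (X₀ ω) ∂P) atTop (𝓝 0) := by
  have hg0 : Tendsto (fun r : ℝ => 2 * (Gfun P X₀ (r - 1)).toReal) atTop (𝓝 (2 * 0)) := by
    refine Tendsto.const_mul 2 ?_
    exact (Gfun_toReal_tendsto_zero P X₀ hG hGratio).comp
      (tendsto_atTop_add_const_right _ (-1) tendsto_id)
  rw [mul_zero] at hg0
  refine squeeze_zero_norm' ?_ hg0
  filter_upwards [eventually_ge_atTop (1:ℝ)] with r hr
  have hs : (0:ℝ) ≤ r - 1 := by linarith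
  have hint : Integrable (fun ω => (shrink (r - 1) (X₀ ω)) ^ 2) P :=
    integrable_shrink_sq P X₀ hmeas hs (hG _ hs).2
  calc ‖∫ ω, shrink r (X₀ ω) ∂P‖
      ≤ ∫ ω, |shrink r (X₀ ω)| ∂P := by
        simpa [Real.norm_eq_abs] using
          norm_integral_le_integral_norm (μ := P) (f := fun ω => shrink r (X₀ ω))
    _ ≤ ∫ ω, (shrink (r - 1) (X₀ ω)) ^ 2 ∂P := by
        refine integral_mono_of_nonneg (Filter.Eventually.of_forall fun ω => abs_nonneg _)
          hint (Filter.Eventually.of_forall fun ω => abs_shrink_le_sq hr)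
    _ = (∫⁻ ω, ENNReal.ofReal ((shrink (r - 1) (X₀ ω)) ^ 2) ∂P).toReal :=
        integral_eq_lintegral_of_nonneg_ae (Filter.Eventually.of_forall fun ω => sq_nonneg _)
          (((measurable_shrink _).comp hmeas).pow_const 2).aestronglyMeasurable
    _ = 2 * (Gfun P X₀ (r - 1)).toReal := by
        rw [lintegral_shrink_sq P X₀ hmeas hs, ENNReal.toReal_mul]
        norm_num

lemma Gfun_shift_littleO [MeasurableSpace Ω] (P : Measure Ω) (X₀ : Ω → ℝ)
    (hG : ∀ r : ℝ, 0 ≤ r → 0 < Gfun P X₀ r ∧ Gfun P X₀ r < ∞)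
    (hGratio : ∀ ε : ℝ, 0 < ε →
      Tendsto (fun r : ℝ => (Gfun P X₀ (r + ε)).toReal / (Gfun P X₀ r).toReal)
        atTop (𝓝 0)) {δ : ℝ} (hδ : 0 < δ) :
    (fun r => (Gfun P X₀ (r + δ)).toReal) =o[atTop] fun r => (Gfun P X₀ r).toReal := by
  rw [isLittleO_iff_tendsto']
  · exact hGratio δ hδ
  · filter_upwards [eventually_ge_atTop (0:ℝ)] with r hr h0
    exact absurd h0 (ENNReal.toReal_ne_zero.mpr ⟨(hG r hr).1.ne', (hG r hr).2.ne⟩)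

lemma sq_le_aux {r ε mv x : ℝ} (hr : 0 ≤ r) (hε : 0 < ε) (hm : |mv| ≤ ε / 2)
    (hx : ε ≤ |shrink r x - mv|) :
    (shrink r x - mv) ^ 2 ≤ 16 * (shrink (r + ε / 4) x) ^ 2 := by
  have ha := abs_shrink hr x
  have hb := abs_shrink (by linarith : (0:ℝ) ≤ r + ε / 4) x
  have h1 : ε / 2 ≤ |shrink r x| := by
    have h2 : |shrink r x - mv| ≤ |shrink r x| + |mv| := abs_sub _ _
    linarith
  have hxr : ε / 2 ≤ |x| - r := by
    rw [ha] at h1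
    rcases max_cases (|x| - r) 0 with ⟨h, _⟩ | ⟨h, _⟩ <;> linarith
  have hbv : |shrink (r + ε / 4) x| = |x| - r - ε / 4 := by
    rw [hb, max_eq_left (by linarith)]
    ring
  have hY4 : |shrink r x - mv| ≤ 4 * |shrink (r + ε / 4) x| := by
    have h2 : |shrink r x - mv| ≤ |shrink r x| + |mv| := abs_sub _ _
    rw [ha, max_eq_left (by linarith)] at h2
    rw [hbv]
    linarith
  calc (shrink r x - mv) ^ 2 = |shrink r x - mv| ^ 2 := (sq_abs _).symm
    _ ≤ (4 * |shrink (r + ε / 4) x|) ^ 2 := by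
        exact pow_le_pow_left₀ (abs_nonneg _) hY4 2
    _ = 16 * (shrink (r + ε / 4) x) ^ 2 := by
        rw [mul_pow, sq_abs]; norm_num


/-- **Lemma 4.1 (eq. (4.6)).** For every `ε > 0`,
`E[Y_{0,r}² · 1(|Y_{0,r}| ≥ ε)] = o(G(r))` as `r → ∞`, where `Y_{0,r} = U_r(X_0) - m_r`. -/
theorem centered_truncated_second_moment_littleO
    [MeasurableSpace Ω] (P : Measure Ω) [IsProbabilityMeasure P]
    (X₀ : Ω → ℝ) (hmeas : Measurable X₀)
    (hG : ∀ r : ℝ, 0 ≤ r → 0 < Gfun P X₀ r ∧ Gfun P X₀ r < ∞)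
    (hGratio : ∀ ε : ℝ, 0 < ε →
      Tendsto (fun r : ℝ => (Gfun P X₀ (r + ε)).toReal / (Gfun P X₀ r).toReal)
        atTop (𝓝 0)) :
    ∀ ε : ℝ, 0 < ε →
      (fun r : ℝ =>
          ∫ ω in {ω | ε ≤ |shrink r (X₀ ω) - ∫ ω', shrink r (X₀ ω') ∂P|},
            (shrink r (X₀ ω) - ∫ ω', shrink r (X₀ ω') ∂P) ^ 2 ∂P)
        =o[atTop] fun r : ℝ => (Gfun P X₀ r).toReal := by
  intro ε hε
  have hδ : (0:ℝ) < ε / 4 := by linarith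
  refine IsBigO.trans_isLittleO ?_ (Gfun_shift_littleO P X₀ hG hGratio hδ)
  rw [isBigO_iff]
  refine ⟨32, ?_⟩
  have hm := NormedAddCommGroup.tendsto_nhds_zero.mp
    (integral_shrink_tendsto_zero P X₀ hmeas hG hGratio) (ε / 2) (by linarith)
  filter_upwards [eventually_ge_atTop (0:ℝ), hm] with r hr hmr
  set mv := ∫ ω', shrink r (X₀ ω') ∂P with hmv
  set s := {ω | ε ≤ |shrink r (X₀ ω) - mv|} with hset
  have hr' : (0:ℝ) ≤ r + ε / 4 := by linarith
  have hmv2 : |mv| ≤ ε / 2 := by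
    rw [Real.norm_eq_abs] at hmr; linarith
  have hmeasY : Measurable fun ω => shrink r (X₀ ω) - mv :=
    ((measurable_shrink r).comp hmeas).sub measurable_const
  have key : ∫ ω in s, (shrink r (X₀ ω) - mv) ^ 2 ∂P ≤ 32 * (Gfun P X₀ (r + ε / 4)).toReal := by
    have e1 : ∫ ω in s, (shrink r (X₀ ω) - mv) ^ 2 ∂P
        = (∫⁻ ω in s, ENNReal.ofReal ((shrink r (X₀ ω) - mv) ^ 2) ∂P).toReal :=
      integral_eq_lintegral_of_nonneg_ae (Filter.Eventually.of_forall fun ω => sq_nonneg _)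
        (hmeasY.pow_const 2).aestronglyMeasurable
    have e2 : (∫⁻ ω in s, ENNReal.ofReal ((shrink r (X₀ ω) - mv) ^ 2) ∂P)
        ≤ 32 * Gfun P X₀ (r + ε / 4) := by
      calc ∫⁻ ω in s, ENNReal.ofReal ((shrink r (X₀ ω) - mv) ^ 2) ∂P
          ≤ ∫⁻ ω in s, ENNReal.ofReal (16 * (shrink (r + ε / 4) (X₀ ω)) ^ 2) ∂P := by
            refine setLIntegral_mono
              ((measurable_const.mul
                (((measurable_shrink _).comp hmeas).pow_const 2)).ennreal_ofReal)
              fun ω hω => ENNReal.ofReal_le_ofReal (sq_le_aux hr hε hmv2 hω)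
        _ ≤ ∫⁻ ω, ENNReal.ofReal (16 * (shrink (r + ε / 4) (X₀ ω)) ^ 2) ∂P :=
            setLIntegral_le_lintegral _ _
        _ = ENNReal.ofReal 16 * ∫⁻ ω, ENNReal.ofReal ((shrink (r + ε / 4) (X₀ ω)) ^ 2) ∂P := by
            have hmb : Measurable fun ω => ENNReal.ofReal ((shrink (r + ε / 4) (X₀ ω)) ^ 2) :=
              (((measurable_shrink _).comp hmeas).pow_const 2).ennreal_ofReal
            simp_rw [ENNReal.ofReal_mul (by norm_num : (0:ℝ) ≤ 16)]
            rw [lintegral_const_mul _ hmb]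
        _ = 32 * Gfun P X₀ (r + ε / 4) := by
            rw [lintegral_shrink_sq P X₀ hmeas hr', ENNReal.ofReal_ofNat, ← mul_assoc]
            norm_num
    rw [e1]
    calc (∫⁻ ω in s, ENNReal.ofReal ((shrink r (X₀ ω) - mv) ^ 2) ∂P).toReal
        ≤ (32 * Gfun P X₀ (r + ε / 4)).toReal :=
          ENNReal.toReal_mono (ENNReal.mul_ne_top (by norm_num) (hG _ hr').2.ne) e2
      _ = 32 * (Gfun P X₀ (r + ε / 4)).toReal := by
          rw [ENNReal.toReal_mul]; norm_num
  have hnn : 0 ≤ ∫ ω in s, (shrink r (X₀ ω) - mv) ^ 2 ∂P :=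
    integral_nonneg fun ω => sq_nonneg _
  rw [Real.norm_eq_abs, Real.norm_eq_abs, abs_of_nonneg hnn,
    abs_of_nonneg ENNReal.toReal_nonneg]
  exact key
end
end

section
/- Let X_0 be a real-valued random variable such that 0 < G(r) < ∞ for every r ≥ 0 and such that for every ε > 0, G(r+ε)/G(r) → 0 as r → ∞. Then for every ε > 0, E[(U_r(X_0))² · 1(|U_r(X_0)| ≥ ε)] = o(G(r)) as r → ∞. -/
open MeasureTheory ProbabilityTheory Filter Asymptotics
open scoped ENNReal Topology NNReal

noncomputable section

variable {Ω : Type*}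

lemma abs_shrink_lt_iff {s t x : ℝ} (hs : 0 ≤ s) (ht : 0 < t) :
    t < |shrink s x| ↔ t + s < |x| := by
  unfold shrink
  split_ifs with h1 h2
  · rw [abs_of_pos (by linarith : (0:ℝ) < x - s), abs_of_pos (by linarith : (0:ℝ) < x)]
    constructor <;> intro <;> linarith
  · rw [abs_of_neg (by linarith : x + s < 0), abs_of_neg (by linarith : x < 0)]
    constructor <;> intro <;> linarith
  · simp only [abs_zero]
    have hx : |x| ≤ s := abs_le.mpr ⟨by linarith, by linarith⟩
    constructor <;> intro h <;> linarith

lemma abs_shrink_le_two {ε r x : ℝ} (hε : 0 < ε) (hr : 0 ≤ r) (h : ε ≤ |shrink r x|) :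
    |shrink r x| ≤ 2 * |shrink (r + ε / 2) x| := by
  unfold shrink at h ⊢
  by_cases h1 : r < x
  · rw [if_pos h1] at h ⊢
    have hx : ε ≤ x - r := by
      rwa [abs_of_pos (by linarith : (0:ℝ) < x - r)] at h
    rw [if_pos (by linarith : r + ε / 2 < x),
      abs_of_pos (by linarith : (0:ℝ) < x - r),
      abs_of_pos (by linarith : (0:ℝ) < x - (r + ε / 2))]
    linarith
  · rw [if_neg h1] at h ⊢
    by_cases h2 : x < -r
    · rw [if_pos h2] at h ⊢
      have hx : ε ≤ -(x + r) := by
        rwa [abs_of_neg (by linarith : x + r < 0)] at h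
      rw [if_neg (by intro hc; linarith : ¬ r + ε / 2 < x),
        if_pos (by linarith : x < -(r + ε / 2)),
        abs_of_neg (by linarith : x + r < 0),
        abs_of_neg (by linarith : x + (r + ε / 2) < 0)]
      linarith
    · rw [if_neg h2, abs_zero] at h; linarith

lemma sq_lintegral_eq [MeasurableSpace Ω] (P : Measure Ω) [IsProbabilityMeasure P]
    (X₀ : Ω → ℝ) (hmeas : Measurable X₀) {s : ℝ} (hs : 0 ≤ s) :
    ∫⁻ ω, ENNReal.ofReal ((shrink s (X₀ ω)) ^ 2) ∂P = 2 * Gfun P X₀ s := by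
  have f_mble : AEMeasurable (fun ω => |shrink s (X₀ ω)|) P :=
    (((measurable_shrink s).comp hmeas).abs).aemeasurable
  have key := lintegral_comp_eq_lintegral_meas_lt_mul (f := fun ω => |shrink s (X₀ ω)|)
    (g := fun t => 2 * t) P (ae_of_all _ fun ω => abs_nonneg _) f_mble
    (fun t _ => (continuous_const.mul continuous_id).intervalIntegrable 0 t)
    ((ae_restrict_iff' measurableSet_Ioi).mpr (ae_of_all _ fun t ht => by
      simp only [Set.mem_Ioi] at ht; positivity))
  have hint : ∀ b : ℝ, (∫ t in (0:ℝ)..b, 2 * t) = b ^ 2 := fun b => by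
    open intervalIntegral in rw [intervalIntegral.integral_const_mul, integral_id]; ring
  have hLHS : ∀ ω, ENNReal.ofReal (∫ t in (0:ℝ)..(|shrink s (X₀ ω)|), 2 * t)
      = ENNReal.ofReal ((shrink s (X₀ ω)) ^ 2) := fun ω => by
    rw [hint, sq_abs]
  simp only [hLHS] at key
  rw [key]
  unfold Gfun
  rw [← lintegral_const_mul' 2 _ (by norm_num : (2:ℝ≥0∞) ≠ ∞)]
  refine setLIntegral_congr_fun measurableSet_Ioi (fun t ht => ?_)
  simp only [Set.mem_Ioi] at ht
  have hset : {a | t < |shrink s (X₀ a)|} = {ω | t + s < |X₀ ω|} := by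
    ext a; exact abs_shrink_lt_iff hs ht
  rw [hset, ENNReal.ofReal_mul (by norm_num : (0:ℝ) ≤ 2)]
  have h2 : ENNReal.ofReal (2:ℝ) = 2 := by norm_num
  rw [h2]; ring

/-- **Eq. (4.7).** For every `ε > 0`,
`E[(U_r(X_0))² · 1(|U_r(X_0)| ≥ ε)] = o(G(r))` as `r → ∞`. -/
theorem truncated_second_moment_littleO
    [MeasurableSpace Ω] (P : Measure Ω) [IsProbabilityMeasure P]
    (X₀ : Ω → ℝ) (hmeas : Measurable X₀)
    (hG : ∀ r : ℝ, 0 ≤ r → 0 < Gfun P X₀ r ∧ Gfun P X₀ r < ∞)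
    (hGratio : ∀ ε : ℝ, 0 < ε →
      Tendsto (fun r : ℝ => (Gfun P X₀ (r + ε)).toReal / (Gfun P X₀ r).toReal)
        atTop (𝓝 0)) :
    ∀ ε : ℝ, 0 < ε →
      (fun r : ℝ =>
          ∫ ω in {ω | ε ≤ |shrink r (X₀ ω)|}, shrink r (X₀ ω) ^ 2 ∂P)
        =o[atTop] fun r : ℝ => (Gfun P X₀ r).toReal := by
  
  intro ε hε
  rw [isLittleO_iff]
  intro c hc
  have hev : ∀ᶠ r in atTop,
      (Gfun P X₀ (r + ε / 2)).toReal / (Gfun P X₀ r).toReal < c / 8 :=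
    (hGratio (ε / 2) (by positivity)).eventually (gt_mem_nhds (by positivity))
  filter_upwards [hev, eventually_ge_atTop (0:ℝ)] with r hratio hr
  have hAmeas : MeasurableSet {ω | ε ≤ |shrink r (X₀ ω)|} :=
    measurableSet_le measurable_const (((measurable_shrink r).comp hmeas).abs)
  have hGr_pos : 0 < (Gfun P X₀ r).toReal :=
    ENNReal.toReal_pos (hG r hr).1.ne' (hG r hr).2.ne
  have hr' : (0:ℝ) ≤ r + ε / 2 := by linarith
  have hG'fin : Gfun P X₀ (r + ε / 2) ≠ ∞ := (hG _ hr').2.ne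
  have hsm : AEStronglyMeasurable (fun ω => (shrink r (X₀ ω)) ^ 2)
      (P.restrict {ω | ε ≤ |shrink r (X₀ ω)|}) :=
    (((measurable_shrink r).comp hmeas).pow_const 2).aestronglyMeasurable
  have h1 : ∫ ω in {ω | ε ≤ |shrink r (X₀ ω)|}, (shrink r (X₀ ω)) ^ 2 ∂P
      = (∫⁻ ω in {ω | ε ≤ |shrink r (X₀ ω)|},
          ENNReal.ofReal ((shrink r (X₀ ω)) ^ 2) ∂P).toReal :=
    integral_eq_lintegral_of_nonneg_ae (ae_of_all _ fun ω => sq_nonneg _) hsm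
  have h2 : ∫⁻ ω in {ω | ε ≤ |shrink r (X₀ ω)|},
        ENNReal.ofReal ((shrink r (X₀ ω)) ^ 2) ∂P
      ≤ ∫⁻ ω, ENNReal.ofReal (4 * (shrink (r + ε / 2) (X₀ ω)) ^ 2) ∂P := by
    refine le_trans (setLIntegral_mono
      ((measurable_const.mul (((measurable_shrink _).comp hmeas).pow_const 2)).ennreal_ofReal)
      fun ω hω => ?_) (setLIntegral_le_lintegral _ _)
    refine ENNReal.ofReal_le_ofReal ?_
    have h2a := abs_shrink_le_two hε hr hω
    calc (shrink r (X₀ ω)) ^ 2 = |shrink r (X₀ ω)| ^ 2 := (sq_abs _).symm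
      _ ≤ (2 * |shrink (r + ε / 2) (X₀ ω)|) ^ 2 := pow_le_pow_left₀ (abs_nonneg _) h2a 2
      _ = 4 * (shrink (r + ε / 2) (X₀ ω)) ^ 2 := by rw [mul_pow, sq_abs]; ring
  have h3 : ∫⁻ ω, ENNReal.ofReal (4 * (shrink (r + ε / 2) (X₀ ω)) ^ 2) ∂P
      = 8 * Gfun P X₀ (r + ε / 2) := by
    have h4 : ∀ ω, ENNReal.ofReal (4 * (shrink (r + ε / 2) (X₀ ω)) ^ 2)
        = 4 * ENNReal.ofReal ((shrink (r + ε / 2) (X₀ ω)) ^ 2) := fun ω => by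
      rw [ENNReal.ofReal_mul (by norm_num : (0:ℝ) ≤ 4)]
      norm_num
    simp only [h4]
    rw [lintegral_const_mul' _ _ (by norm_num : (4:ℝ≥0∞) ≠ ∞),
      sq_lintegral_eq P X₀ hmeas hr']
    ring
  have hbound : ∫ ω in {ω | ε ≤ |shrink r (X₀ ω)|}, (shrink r (X₀ ω)) ^ 2 ∂P
      ≤ 8 * (Gfun P X₀ (r + ε / 2)).toReal := by
    rw [h1]
    have hmono : (∫⁻ ω in {ω | ε ≤ |shrink r (X₀ ω)|},
        ENNReal.ofReal ((shrink r (X₀ ω)) ^ 2) ∂P).toReal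
        ≤ (8 * Gfun P X₀ (r + ε / 2)).toReal := by
      refine ENNReal.toReal_mono ?_ (h3 ▸ h2)
      exact ENNReal.mul_ne_top (by norm_num) hG'fin
    refine hmono.trans_eq ?_
    rw [ENNReal.toReal_mul]
    norm_num
  have hnn : 0 ≤ ∫ ω in {ω | ε ≤ |shrink r (X₀ ω)|}, (shrink r (X₀ ω)) ^ 2 ∂P :=
    setIntegral_nonneg hAmeas fun ω _ => sq_nonneg _
  rw [Real.norm_of_nonneg hnn, Real.norm_of_nonneg hGr_pos.le]
  have hratio' : (Gfun P X₀ (r + ε / 2)).toReal ≤ c / 8 * (Gfun P X₀ r).toReal := by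
    rw [div_lt_iff₀ hGr_pos] at hratio
    linarith
  calc ∫ ω in {ω | ε ≤ |shrink r (X₀ ω)|}, (shrink r (X₀ ω)) ^ 2 ∂P
      ≤ 8 * (Gfun P X₀ (r + ε / 2)).toReal := hbound
    _ ≤ 8 * (c / 8 * (Gfun P X₀ r).toReal) := by linarith
    _ = c * (Gfun P X₀ r).toReal := by ring
end
end

section
/- Let (X_k, k ∈ ℤ) be a strictly stationary sequence of real-valued random variables such that 0 < G(r) < ∞ for every r ≥ 0. For r ≥ 0 and k ∈ ℤ, set m_r := E[U_r(X_0)] and Y_{k,r} := U_r(X_k) − m_r. Suppose C > 0 is a constant such that for all r ≥ 0 and all n ∈ ℕ, (1/C)·n·E[Y_{0,r}²] ≤ E[(∑_{k=1}^n Y_{k,r})²] ≤ C·n·E[Y_{0,r}²], and let N_0 be a positive integer with (1/C)·N_0·E[Y_{0,0}²] > 1. Then for each integer n ≥ N_0 there exists a positive number r(n) such that ‖∑_{k=1}^n Y_{k,r(n)}‖₂ = 1, where ‖·‖₂ denotes the L² norm. -/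
open MeasureTheory ProbabilityTheory Filter Asymptotics
open scoped ENNReal Topology NNReal

noncomputable section

variable {Ω : Type*}

def shAux (r x : ℝ) : ℝ := max (x - max r 0) 0 - max (-x - max r 0) 0

lemma shAux_eq_shrink {r : ℝ} (hr : 0 ≤ r) (x : ℝ) : shAux r x = shrink r x := by
  unfold shAux shrink
  rw [max_eq_left hr]
  split_ifs with h1 h2 <;>
  · rw [max_def, max_def]; split_ifs <;> linarith

lemma abs_shAux_le (r x : ℝ) : |shAux r x| ≤ |x| := by
  have hm : 0 ≤ max r 0 := le_max_right _ _
  unfold shAux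
  rcases le_total (x - max r 0) 0 with h1 | h1 <;>
  rcases le_total (-x - max r 0) 0 with h2 | h2 <;>
  [rw [max_eq_right h1, max_eq_right h2]; rw [max_eq_right h1, max_eq_left h2];
   rw [max_eq_left h1, max_eq_right h2]; rw [max_eq_left h1, max_eq_left h2]] <;>
  (rw [abs_le]; constructor <;> linarith [le_abs_self x, neg_abs_le x])

lemma continuous_shAux : Continuous fun p : ℝ × ℝ => shAux p.1 p.2 := by
  unfold shAux; fun_prop

lemma continuous_shAux_left (x : ℝ) : Continuous fun r => shAux r x :=
  continuous_shAux.comp (continuous_id.prodMk continuous_const)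

lemma continuous_shAux_right (r : ℝ) : Continuous fun x => shAux r x :=
  continuous_shAux.comp (continuous_const.prodMk continuous_id)

lemma shAux_eq_zero {r x : ℝ} (h : |x| ≤ r) : shAux r x = 0 := by
  unfold shAux
  have h1 : x - max r 0 ≤ 0 := by
    have := le_abs_self x; have := le_max_left r (0:ℝ); linarith
  have h2 : -x - max r 0 ≤ 0 := by
    have := neg_abs_le x; have := le_max_left r (0:ℝ); linarith
  rw [max_eq_right h1, max_eq_right h2, sub_zero]

lemma tendsto_shAux_atTop (x : ℝ) : Tendsto (fun j : ℕ => shAux (j : ℝ) x) atTop (𝓝 0) := by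
  apply tendsto_const_nhds.congr'
  filter_upwards [eventually_ge_atTop ⌈|x|⌉₊] with j hj
  exact (shAux_eq_zero (le_trans (Nat.le_ceil _) (by exact_mod_cast hj))).symm

/-- **Lemma 4.3 (first part).** For each `n ≥ N₀` there is `r(n) > 0` with
`‖∑_{k=1}^n Y_{k,r(n)}‖₂ = 1`. -/
theorem exists_shrinking_parameter_norm_one
    [MeasurableSpace Ω] (P : Measure Ω) [IsProbabilityMeasure P]
    (X : ℤ → Ω → ℝ) (hmeas : ∀ k, Measurable (X k)) (hstat : StrictlyStationary P X)
    (hG : ∀ r : ℝ, 0 ≤ r → 0 < Gfun P (X 0) r ∧ Gfun P (X 0) r < ∞)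
    (C : ℝ) (hC : 0 < C)
    (hbound : ∀ r : ℝ, 0 ≤ r → ∀ n : ℕ, 0 < n →
      (1 / C) * n * ∫ ω, Ymix P X 0 r ω ^ 2 ∂P ≤
          ∫ ω, (∑ k ∈ Finset.Icc (1 : ℤ) (n : ℤ), Ymix P X k r ω) ^ 2 ∂P ∧
        ∫ ω, (∑ k ∈ Finset.Icc (1 : ℤ) (n : ℤ), Ymix P X k r ω) ^ 2 ∂P ≤
          C * n * ∫ ω, Ymix P X 0 r ω ^ 2 ∂P)
    (N₀ : ℕ) (hN₀pos : 0 < N₀)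
    (hN₀ : 1 < (1 / C) * N₀ * ∫ ω, Ymix P X 0 0 ω ^ 2 ∂P) :
    ∀ n : ℕ, N₀ ≤ n → ∃ r : ℝ, 0 < r ∧
      eLpNorm (fun ω => ∑ k ∈ Finset.Icc (1 : ℤ) (n : ℤ), Ymix P X k r ω) 2 P = 1 := by
  intro n hn
  have hn0 : 0 < n := lt_of_lt_of_le hN₀pos hn
  classical
  -- all X k have the same law as X 0
  have hlaw : ∀ k : ℤ, Measure.map (X k) P = Measure.map (X 0) P := by
    intro k
    have h := hstat k 0 0
    have hmk : ∀ j : ℤ, Measurable fun ω => fun i : Fin 1 => X (j + (i : ℤ)) ω :=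
      fun j => measurable_pi_lambda _ fun i => hmeas _
    have h2 := congrArg (Measure.map fun v : Fin 1 → ℝ => v 0) h
    rw [Measure.map_map (measurable_pi_apply 0) (hmk k),
      Measure.map_map (measurable_pi_apply 0) (hmk 0)] at h2
    simpa [Function.comp_def] using h2
  -- X 0 is in L²
  have hX2 : MemLp (X 0) 2 P := by
    have hfin := (hG 0 le_rfl).2
    have hnn : 0 ≤ᵐ[P] fun ω => |X 0 ω| := ae_of_all _ fun ω => abs_nonneg _
    have key := lintegral_rpow_eq_lintegral_meas_lt_mul P hnn
      (hmeas 0).abs.aemeasurable (p := 2) two_pos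
    have hG0 : ∫⁻ t in Set.Ioi (0:ℝ), P {a | t < |X 0 a|} * ENNReal.ofReal (t ^ ((2:ℝ) - 1))
        = Gfun P (X 0) 0 := by
      unfold Gfun
      refine setLIntegral_congr_fun measurableSet_Ioi (fun t ht => ?_)
      rw [show ((2:ℝ) - 1) = 1 by norm_num, Real.rpow_one, mul_comm]
      norm_num
    have hlt : ∫⁻ ω, ENNReal.ofReal (|X 0 ω| ^ (2:ℝ)) ∂P < ∞ := by
      rw [key, hG0]
      exact ENNReal.mul_lt_top (by simp) hfin
    refine ⟨(hmeas 0).aestronglyMeasurable, ?_⟩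
    rw [eLpNorm_eq_lintegral_rpow_enorm_toReal (by norm_num) (by norm_num)]
    refine ENNReal.rpow_lt_top_of_nonneg (by norm_num) ?_
    rw [← lt_top_iff_ne_top]
    have : ∀ ω, ‖X 0 ω‖ₑ ^ (2:ℝ≥0∞).toReal = ENNReal.ofReal (|X 0 ω| ^ (2:ℝ)) := by
      intro ω
      rw [Real.enorm_eq_ofReal_abs, ← ENNReal.ofReal_rpow_of_nonneg (abs_nonneg _) (by norm_num)]
      norm_num
    rw [lintegral_congr this]
    exact hlt
  have hXk2 : ∀ k : ℤ, MemLp (X k) 2 P := by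
    intro k
    have h0 : MemLp (id : ℝ → ℝ) 2 (Measure.map (X 0) P) :=
      (memLp_map_measure_iff aestronglyMeasurable_id (hmeas 0).aemeasurable).2 hX2
    have h1 : MemLp (id : ℝ → ℝ) 2 (Measure.map (X k) P) := by rw [hlaw k]; exact h0
    exact (memLp_map_measure_iff aestronglyMeasurable_id (hmeas k).aemeasurable).1 h1
  have hXk1 : ∀ k : ℤ, Integrable (X k) P := fun k => (hXk2 k).integrable one_le_two
  set m : ℝ → ℝ := fun r => ∫ ω, shAux r (X 0 ω) ∂P with hm_def
  set B : ℝ := ∫ ω, |X 0 ω| ∂P with hB_def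
  have hshMeas : ∀ (r : ℝ) (k : ℤ), Measurable fun ω => shAux r (X k ω) :=
    fun r k => (continuous_shAux_right r).measurable.comp (hmeas k)
  have hsh2 : ∀ (k : ℤ) (r : ℝ), MemLp (fun ω => shAux r (X k ω)) 2 P := fun k r =>
    (hXk2 k).of_le (hshMeas r k).aestronglyMeasurable
      (ae_of_all _ fun ω => by simpa [Real.norm_eq_abs] using abs_shAux_le r (X k ω))
  have hY2 : ∀ (k : ℤ) (r : ℝ), MemLp (fun ω => shAux r (X k ω) - m r) 2 P :=
    fun k r => (hsh2 k r).sub (memLp_const _)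
  have hS2 : ∀ r : ℝ, MemLp (fun ω => ∑ k ∈ Finset.Icc (1:ℤ) (n:ℤ),
      (shAux r (X k ω) - m r)) 2 P :=
    fun r => memLp_finset_sum _ fun k _ => hY2 k r
  have hYeq : ∀ (r : ℝ), 0 ≤ r → ∀ (k : ℤ) (ω : Ω),
      Ymix P X k r ω = shAux r (X k ω) - m r := by
    intro r hr k ω
    unfold Ymix
    rw [← shAux_eq_shrink hr]
    congr 1
    exact integral_congr_ae (ae_of_all _ fun ω' => (shAux_eq_shrink hr _).symm)
  set Φ : ℝ → ℝ := fun r => ∫ ω, (∑ k ∈ Finset.Icc (1:ℤ) (n:ℤ),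
    (shAux r (X k ω) - m r)) ^ 2 ∂P with hΦ_def
  have hΦeq : ∀ r : ℝ, 0 ≤ r →
      (∫ ω, (∑ k ∈ Finset.Icc (1:ℤ) (n:ℤ), Ymix P X k r ω) ^ 2 ∂P) = Φ r := by
    intro r hr
    simp only [hΦ_def, hYeq r hr]
  -- continuity of m
  have hmcont : Continuous m := by
    refine continuous_of_dominated (bound := fun ω => |X 0 ω|)
      (fun r => (hshMeas r 0).aestronglyMeasurable)
      (fun r => ae_of_all _ fun ω => by
        simpa [Real.norm_eq_abs] using abs_shAux_le r (X 0 ω))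
      (hXk1 0).abs
      (ae_of_all _ fun ω => continuous_shAux_left (X 0 ω))
  have hmB : ∀ r : ℝ, |m r| ≤ B := by
    intro r
    refine le_trans ?_ (integral_mono ((hsh2 0 r).integrable one_le_two).abs (hXk1 0).abs
      fun ω => abs_shAux_le r (X 0 ω))
    simpa [Real.norm_eq_abs] using norm_integral_le_integral_norm (fun ω => shAux r (X 0 ω)) (μ := P)
  -- the dominating bound for Φ
  set bound : Ω → ℝ := fun ω => (∑ k ∈ Finset.Icc (1:ℤ) (n:ℤ), (|X k ω| + B)) ^ 2
    with hbound_def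
  have hbound_int : Integrable bound P := by
    refine MemLp.integrable_sq ?_
    refine memLp_finset_sum _ fun k _ => MemLp.add ?_ (memLp_const _)
    simpa [Real.norm_eq_abs] using (hXk2 k).norm
  have hkey : ∀ (r : ℝ) (ω : Ω),
      ‖(∑ k ∈ Finset.Icc (1:ℤ) (n:ℤ), (shAux r (X k ω) - m r)) ^ 2‖ ≤ bound ω := by
    intro r ω
    have h1 : |∑ k ∈ Finset.Icc (1:ℤ) (n:ℤ), (shAux r (X k ω) - m r)|
        ≤ ∑ k ∈ Finset.Icc (1:ℤ) (n:ℤ), (|X k ω| + B) := by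
      refine (Finset.abs_sum_le_sum_abs _ _).trans (Finset.sum_le_sum fun k _ => ?_)
      calc |shAux r (X k ω) - m r| ≤ |shAux r (X k ω)| + |m r| := abs_sub _ _
        _ ≤ |X k ω| + B := add_le_add (abs_shAux_le _ _) (hmB r)
    calc ‖(∑ k ∈ Finset.Icc (1:ℤ) (n:ℤ), (shAux r (X k ω) - m r)) ^ 2‖
        = |∑ k ∈ Finset.Icc (1:ℤ) (n:ℤ), (shAux r (X k ω) - m r)| ^ 2 := by
          rw [Real.norm_eq_abs, ← pow_abs]
      _ ≤ (∑ k ∈ Finset.Icc (1:ℤ) (n:ℤ), (|X k ω| + B)) ^ 2 :=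
          pow_le_pow_left₀ (abs_nonneg _) h1 2
  have hΦcont : Continuous Φ := by
    refine continuous_of_dominated (bound := bound)
      (fun r => ?_) (fun r => ae_of_all _ fun ω => hkey r ω) hbound_int
      (ae_of_all _ fun ω => ?_)
    · exact ((Finset.measurable_sum _ fun k _ =>
        (hshMeas r k).sub measurable_const).pow_const 2).aestronglyMeasurable
    · exact (continuous_finset_sum _ fun k _ =>
        (continuous_shAux_left (X k ω)).sub hmcont).pow 2
  -- m j → 0 and the variance tends to 0
  have hm0 : Tendsto (fun j : ℕ => m (j : ℝ)) atTop (𝓝 0) := by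
    have := tendsto_integral_of_dominated_convergence (fun ω => |X 0 ω|)
      (fun j => (hshMeas (j:ℝ) 0).aestronglyMeasurable)
      (hXk1 0).abs
      (fun j => ae_of_all _ fun ω => by
        simpa [Real.norm_eq_abs] using abs_shAux_le (j:ℝ) (X 0 ω))
      (ae_of_all _ fun ω => tendsto_shAux_atTop (X 0 ω))
    simpa using this
  have hV0 : Tendsto (fun j : ℕ => ∫ ω, (shAux (j:ℝ) (X 0 ω) - m (j:ℝ)) ^ 2 ∂P)
      atTop (𝓝 0) := by
    have hbd2 : Integrable (fun ω => (|X 0 ω| + B) ^ 2) P := by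
      refine MemLp.integrable_sq (MemLp.add ?_ (memLp_const _))
      simpa [Real.norm_eq_abs] using hX2.norm
    have := tendsto_integral_of_dominated_convergence (fun ω => (|X 0 ω| + B) ^ 2)
      (fun j => (((hshMeas (j:ℝ) 0).sub measurable_const).pow_const 2).aestronglyMeasurable)
      hbd2
      (fun j => ae_of_all _ fun ω => by
        have h1 : |shAux (j:ℝ) (X 0 ω) - m (j:ℝ)| ≤ |X 0 ω| + B :=
          (abs_sub _ _).trans (add_le_add (abs_shAux_le _ _) (hmB _))
        calc ‖(shAux (j:ℝ) (X 0 ω) - m (j:ℝ)) ^ 2‖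
            = |shAux (j:ℝ) (X 0 ω) - m (j:ℝ)| ^ 2 := by rw [Real.norm_eq_abs, ← pow_abs]
          _ ≤ (|X 0 ω| + B) ^ 2 := pow_le_pow_left₀ (abs_nonneg _) h1 2)
      (ae_of_all _ fun ω => by
        have := ((tendsto_shAux_atTop (X 0 ω)).sub hm0).pow 2
        simpa using this)
    simpa using this
  -- find R with Φ R < 1
  have hCn : Tendsto (fun j : ℕ => C * n * ∫ ω, (shAux (j:ℝ) (X 0 ω) - m (j:ℝ)) ^ 2 ∂P)
      atTop (𝓝 0) := by
    simpa using hV0.const_mul (C * n)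
  have hev : ∀ᶠ j : ℕ in atTop,
      C * n * (∫ ω, (shAux (j:ℝ) (X 0 ω) - m (j:ℝ)) ^ 2 ∂P) < 1 :=
    hCn.eventually_lt_const one_pos |>.mono fun j h => h
  obtain ⟨j, hjlt, hj1⟩ := (hev.and (eventually_ge_atTop 1)).exists
  have hjR : (0:ℝ) ≤ (j:ℝ) := Nat.cast_nonneg j
  have hΦj : Φ (j:ℝ) < 1 := by
    have hb := (hbound (j:ℝ) hjR n hn0).2
    rw [hΦeq (j:ℝ) hjR] at hb
    simp only [hYeq (j:ℝ) hjR] at hb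
    exact lt_of_le_of_lt hb hjlt
  have hI0 : 0 ≤ ∫ ω, Ymix P X 0 0 ω ^ 2 ∂P := integral_nonneg fun ω => sq_nonneg _
  have hΦ0 : 1 < Φ 0 := by
    have hb := (hbound 0 le_rfl n hn0).1
    rw [hΦeq 0 le_rfl] at hb
    refine lt_of_lt_of_le (lt_of_lt_of_le hN₀ ?_) hb
    refine mul_le_mul_of_nonneg_right ?_ hI0
    exact mul_le_mul_of_nonneg_left (Nat.cast_le.2 hn) (by positivity)
  obtain ⟨r, hrmem, hΦr⟩ := intermediate_value_Icc' hjR hΦcont.continuousOn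
    ⟨hΦj.le, hΦ0.le⟩
  have hrpos : 0 < r := by
    rcases hrmem.1.lt_or_eq with h | h
    · exact h
    · exfalso; rw [← h] at hΦr; linarith
  refine ⟨r, hrpos, ?_⟩
  have hfun : (fun ω => ∑ k ∈ Finset.Icc (1:ℤ) (n:ℤ), Ymix P X k r ω)
      = fun ω => ∑ k ∈ Finset.Icc (1:ℤ) (n:ℤ), (shAux r (X k ω) - m r) :=
    funext fun ω => Finset.sum_congr rfl fun k _ => hYeq r hrmem.1 k ω
  rw [hfun]
  rw [(hS2 r).eLpNorm_eq_integral_rpow_norm (by norm_num) (by norm_num)]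
  have hint : (∫ ω, ‖∑ k ∈ Finset.Icc (1:ℤ) (n:ℤ), (shAux r (X k ω) - m r)‖
      ^ (2:ℝ≥0∞).toReal ∂P) = Φ r := by
    rw [hΦ_def]
    refine integral_congr_ae (ae_of_all _ fun ω => ?_)
    simp only [show ((2:ℝ≥0∞)).toReal = ((2:ℕ):ℝ) by norm_num, Real.rpow_natCast,
      Real.norm_eq_abs, sq_abs]
  rw [hint, hΦr]
  norm_num
end
end
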